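/- For every vertex u in a graph G, the compact number φ(u) is at most the core number core_G(u): φ(u) ≤ core_G(u). -/
import Mathlib


open Finset

variable {V : Type*} [Fintype V] [DecidableEq V]

/-- Number of edges of `G` with both endpoints in `S`. -/
def edgeCount (G : SimpleGraph V) [DecidableRel G.Adj] (S : Finset V) : ℕ :=
  (G.edgeFinset.filter fun e => ∀ v ∈ e, v ∈ S).card

/-- Edge density |E(S)|/|S| of the induced subgraph G[S]. -/
noncomputable def density (G : SimpleGraph V) [DecidableRel G.Adj] (S : Finset V) : ℝ :=
  (edgeCount G S : ℝ) / (S.card : ℝ)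

/-- `G[S]` is ρ-compact: connected, and removing any nonempty `U ⊆ S`
removes at least `ρ * |U|` edges. -/
def IsCompactSub (G : SimpleGraph V) [DecidableRel G.Adj] (ρ : ℝ) (S : Finset V) : Prop :=
  0 ≤ ρ ∧ (G.induce (S : Set V)).Connected ∧
  ∀ U ⊆ S, U.Nonempty →
    ρ * (U.card : ℝ) ≤ (edgeCount G S : ℝ) - (edgeCount G (S \ U) : ℝ)

/-- `G[S]` is a locally densest subgraph: a maximal `density G S`-compact subgraph. -/
def IsLDS (G : SimpleGraph V) [DecidableRel G.Adj] (S : Finset V) : Prop :=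
  IsCompactSub G (density G S) S ∧
  ∀ S' : Finset V, S ⊂ S' → ¬ IsCompactSub G (density G S) S'

/-- The compact number of `u`: the largest ρ such that `u`
lies in a ρ-compact subgraph of `G`. -/
noncomputable def compactNum (G : SimpleGraph V) [DecidableRel G.Adj] (u : V) : ℝ :=
  sSup {ρ : ℝ | ∃ S : Finset V, u ∈ S ∧ IsCompactSub G ρ S}

/-- The core number of `u`: the largest `k` such that `u` belongs to an induced
subgraph of minimum degree at least `k`. -/
noncomputable def coreNum (G : SimpleGraph V) [DecidableRel G.Adj] (u : V) : ℕ :=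
  sSup {k : ℕ | ∃ S : Finset V, u ∈ S ∧ ∀ v ∈ S, k ≤ (S.filter (G.Adj v)).card}

lemma edgeCount_le (G : SimpleGraph V) [DecidableRel G.Adj] (S : Finset V) (v : V) :
    edgeCount G S ≤ edgeCount G (S \ {v}) + (S.filter (G.Adj v)).card := by
  classical
  unfold edgeCount
  set A := G.edgeFinset.filter fun e => ∀ x ∈ e, x ∈ S with hA
  have hsplit : (A.filter fun e => v ∉ e).card + (A.filter fun e => v ∈ e).card = A.card := by
    simpa using Finset.card_filter_add_card_filter_not (s := A)
      (p := fun e => v ∉ e)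
  have h1 : (A.filter fun e => v ∉ e) ⊆
      G.edgeFinset.filter fun e => ∀ x ∈ e, x ∈ S \ {v} := by
    intro e he
    simp only [Finset.mem_filter, hA] at he ⊢
    refine ⟨he.1.1, fun x hx => ?_⟩
    simp only [Finset.mem_sdiff, Finset.mem_singleton]
    exact ⟨he.1.2 x hx, fun h => he.2 (h ▸ hx)⟩
  have h2 : (A.filter fun e => v ∈ e) ⊆
      (S.filter (G.Adj v)).image (fun w => s(v, w)) := by
    intro e he
    simp only [Finset.mem_filter, hA, SimpleGraph.mem_edgeFinset] at he
    obtain ⟨⟨hee, hS⟩, hv⟩ := he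
    induction e using Sym2.ind with
    | _ a b =>
      rw [Sym2.mem_iff] at hv
      rw [SimpleGraph.mem_edgeSet] at hee
      rcases hv with rfl | rfl
      · refine Finset.mem_image.2 ⟨b, ?_, rfl⟩
        exact Finset.mem_filter.2 ⟨hS b (by simp), hee⟩
      · refine Finset.mem_image.2 ⟨a, ?_, by rw [Sym2.eq_swap]⟩
        exact Finset.mem_filter.2 ⟨hS a (by simp), hee.symm⟩
  calc A.card = (A.filter fun e => v ∉ e).card + (A.filter fun e => v ∈ e).card := hsplit.symm
    _ ≤ (G.edgeFinset.filter fun e => ∀ x ∈ e, x ∈ S \ {v}).card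
        + (S.filter (G.Adj v)).card := by
        refine Nat.add_le_add (Finset.card_le_card h1) ?_
        exact le_trans (Finset.card_le_card h2) Finset.card_image_le

/-- the compact number is at most the core number. -/
theorem compactNum_le_coreNum (G : SimpleGraph V) [DecidableRel G.Adj] (u : V) :
    compactNum G u ≤ (coreNum G u : ℝ) := by
  classical
  apply Real.sSup_le
  · rintro ρ ⟨S, huS, h0, _, hrem⟩
    have hdeg : ∀ v ∈ S, ρ ≤ ((S.filter (G.Adj v)).card : ℝ) := by
      intro v hv
      have h := hrem {v} (by simpa using hv) ⟨v, Finset.mem_singleton_self v⟩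
      simp only [Finset.card_singleton, Nat.cast_one, mul_one] at h
      have h2 : (edgeCount G S : ℝ) ≤ (edgeCount G (S \ {v}) : ℝ)
          + ((S.filter (G.Adj v)).card : ℝ) := by
        exact_mod_cast edgeCount_le G S v
      linarith
    have hbdd : BddAbove {k : ℕ | ∃ S : Finset V, u ∈ S ∧
        ∀ v ∈ S, k ≤ (S.filter (G.Adj v)).card} := by
      refine ⟨Fintype.card V, ?_⟩
      rintro k ⟨T, huT, hT⟩
      exact le_trans (hT u huT) (le_trans (Finset.card_filter_le _ _)
        (Finset.card_le_univ T))
    have hmem : ⌈ρ⌉₊ ∈ {k : ℕ | ∃ S : Finset V, u ∈ S ∧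
        ∀ v ∈ S, k ≤ (S.filter (G.Adj v)).card} :=
      ⟨S, huS, fun v hv => Nat.ceil_le.2 (by exact_mod_cast hdeg v hv)⟩
    have : ⌈ρ⌉₊ ≤ coreNum G u := le_csSup hbdd hmem
    calc ρ ≤ (⌈ρ⌉₊ : ℝ) := Nat.le_ceil ρ
      _ ≤ (coreNum G u : ℝ) := by exact_mod_cast this
  · exact Nat.cast_nonneg _
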